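/- Let K be an N×N real symmetric matrix with non-negative entries whose eigenvalues are all non-negative (i.e., K is positive semi-definite). Then the function η ↦ ρ(K·diag(η)) is convex on [0,1]^N. -/

import Mathlib

open Matrix Polynomial

/-- The spectral radius of a real square matrix: the supremum of the moduli of its
complex eigenvalues (roots of the characteristic polynomial over `ℂ`). -/
noncomputable def specRad {N : ℕ} (M : Matrix (Fin N) (Fin N) ℝ) : ℝ :=
  sSup {r : ℝ | ∃ z : ℂ, ((M.map (algebraMap ℝ ℂ)).charpoly).IsRoot z ∧ r = ‖z‖}

namespace SpecRadAux

variable {N : ℕ}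

lemma isRoot_charpoly_iff (M : Matrix (Fin N) (Fin N) ℂ) (z : ℂ) :
    M.charpoly.IsRoot z ↔ z ∈ spectrum ℂ M := by
  have h1 : M.charpoly.eval z = (Matrix.diagonal (fun _ : Fin N => z) - M).det := by
    rw [Matrix.charpoly, _root_.eval_det, matPolyEquiv_charmatrix]
    simp [Matrix.scalar_apply]
  rw [Polynomial.IsRoot, h1, spectrum.mem_iff, Matrix.isUnit_iff_isUnit_det,
    isUnit_iff_ne_zero, not_ne_iff, Matrix.algebraMap_eq_diagonal]
  rfl

lemma spectrum_mul_comm (a b : Matrix (Fin N) (Fin N) ℂ) :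
    spectrum ℂ (a * b) = spectrum ℂ (b * a) := by
  ext z
  rcases eq_or_ne z 0 with rfl | hz
  · simp only [spectrum.zero_mem_iff, Matrix.isUnit_iff_isUnit_det, Matrix.det_mul,
      mul_comm (a.det) (b.det)]
  · simpa using spectrum.unit_mem_mul_comm (a := a) (b := b) (r := Units.mk0 z hz)

lemma mem_spectrum_map_iff (T : Matrix (Fin N) (Fin N) ℝ) (hT : T.IsHermitian) (z : ℂ) :
    z ∈ spectrum ℂ (T.map (algebraMap ℝ ℂ)) ↔ ∃ i, (hT.eigenvalues i : ℂ) = z := by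
  classical
  set U : Matrix (Fin N) (Fin N) ℝ := ↑hT.eigenvectorUnitary with hU
  set μ : Fin N → ℝ := hT.eigenvalues with hμ
  set φ : ℝ →+* ℂ := algebraMap ℝ ℂ with hφ
  have hUV : U * star U = 1 := (Matrix.mem_unitaryGroup_iff).mp hT.eigenvectorUnitary.2
  have h1 : T.map φ = (U.map φ) * (Matrix.diagonal fun i => (μ i : ℂ)) * ((star U).map φ) := by
    conv_lhs => rw [hT.spectral_theorem]
    rw [Unitary.conjStarAlgAut_apply, Matrix.map_mul, Matrix.map_mul, Matrix.diagonal_map (map_zero φ)]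
    rw [hU, hμ, hφ]
    congr 2
  have hUVc : (U.map φ) * ((star U).map φ) = 1 := by
    rw [← Matrix.map_mul, hUV, Matrix.map_one φ (map_zero φ) (map_one φ)]
  have hdet : (Matrix.diagonal (fun _ : Fin N => z) - T.map φ).det = ∏ i, (z - (μ i : ℂ)) := by
    have h2 : Matrix.diagonal (fun _ : Fin N => z) - T.map φ =
        (U.map φ) * (Matrix.diagonal (fun i => z - (μ i : ℂ))) * ((star U).map φ) := by
      have h3 : (Matrix.diagonal (fun i : Fin N => z - (μ i : ℂ)))
          = Matrix.diagonal (fun _ : Fin N => z) - Matrix.diagonal (fun i => (μ i : ℂ)) := by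
        rw [Matrix.diagonal_sub]
      rw [h3, Matrix.mul_sub, Matrix.sub_mul, ← h1]
      congr 1
      have : (Matrix.diagonal (fun _ : Fin N => z)) = z • (1 : Matrix (Fin N) (Fin N) ℂ) := by
        simp [Matrix.smul_one_eq_diagonal]
      rw [this, Matrix.mul_smul, Matrix.mul_one, Matrix.smul_mul, hUVc]
    rw [h2, Matrix.det_mul, Matrix.det_mul, mul_right_comm, ← Matrix.det_mul, hUVc]
    simp [Matrix.det_diagonal]
  rw [spectrum.mem_iff, Matrix.isUnit_iff_isUnit_det, isUnit_iff_ne_zero, not_ne_iff,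
    Matrix.algebraMap_eq_diagonal]
  have hdg : Matrix.diagonal ((algebraMap ℂ (Fin N → ℂ)) z) =
      Matrix.diagonal (fun _ : Fin N => z) := rfl
  rw [hdg, hdet, Finset.prod_eq_zero_iff]
  constructor
  · rintro ⟨i, -, hi⟩
    exact ⟨i, by linear_combination -hi⟩
  · rintro ⟨i, hi⟩
    exact ⟨i, Finset.mem_univ i, by rw [← hi]; ring⟩

lemma specRad_eq (M T : Matrix (Fin N) (Fin N) ℝ) (hT : T.PosSemidef)
    (h : spectrum ℂ (M.map (algebraMap ℝ ℂ)) = spectrum ℂ (T.map (algebraMap ℝ ℂ))) :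
    specRad M = ⨆ i, hT.1.eigenvalues i := by
  have hset : {r : ℝ | ∃ z : ℂ, ((M.map (algebraMap ℝ ℂ)).charpoly).IsRoot z ∧ r = ‖z‖}
      = Set.range (fun i => hT.1.eigenvalues i) := by
    ext r
    constructor
    · rintro ⟨z, hz, rfl⟩
      rw [isRoot_charpoly_iff, h, mem_spectrum_map_iff _ hT.1] at hz
      obtain ⟨i, rfl⟩ := hz
      exact ⟨i, by simp [abs_of_nonneg (hT.eigenvalues_nonneg i)]⟩
    · rintro ⟨i, rfl⟩
      refine ⟨(hT.1.eigenvalues i : ℂ), ?_, ?_⟩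
      · rw [isRoot_charpoly_iff, h, mem_spectrum_map_iff _ hT.1]; exact ⟨i, rfl⟩
      · simp [abs_of_nonneg (hT.eigenvalues_nonneg i)]
  rw [specRad, hset, iSup]

lemma rayleigh_le (T : Matrix (Fin N) (Fin N) ℝ) (hT : T.PosSemidef) (v : Fin N → ℝ)
    (hv : v ⬝ᵥ v = 1) : v ⬝ᵥ (T *ᵥ v) ≤ ⨆ i, hT.1.eigenvalues i := by
  classical
  set U : Matrix (Fin N) (Fin N) ℝ := ↑hT.1.eigenvectorUnitary with hU
  set μ : Fin N → ℝ := hT.1.eigenvalues with hμ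
  have hUV : U * star U = 1 := (Matrix.mem_unitaryGroup_iff).mp hT.1.eigenvectorUnitary.2
  set w : Fin N → ℝ := star U *ᵥ v with hw
  have hdiag : Matrix.diagonal (RCLike.ofReal ∘ μ) = Matrix.diagonal μ := by
    congr 1
  have hTv : T *ᵥ v = U *ᵥ (Matrix.diagonal μ *ᵥ w) := by
    conv_lhs => rw [hT.1.spectral_theorem, hdiag]
    rw [Unitary.conjStarAlgAut_apply, ← Matrix.mulVec_mulVec, ← Matrix.mulVec_mulVec]
  have hstar : star U = Uᵀ := by
    ext i j; simp [Matrix.star_apply]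
  have hvU : v ᵥ* U = w := by
    rw [hw, hstar, Matrix.mulVec_transpose]
  have hq : v ⬝ᵥ (T *ᵥ v) = w ⬝ᵥ (Matrix.diagonal μ *ᵥ w) := by
    rw [hTv, Matrix.dotProduct_mulVec, hvU]
  have hww : w ⬝ᵥ w = 1 := by
    calc w ⬝ᵥ w = (v ᵥ* U) ⬝ᵥ w := by rw [hvU]
    _ = v ⬝ᵥ (U *ᵥ w) := (Matrix.dotProduct_mulVec v U w).symm
    _ = v ⬝ᵥ ((U * star U) *ᵥ v) := by rw [hw, Matrix.mulVec_mulVec]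
    _ = 1 := by rw [hUV, Matrix.one_mulVec, hv]
  set c : ℝ := ⨆ i, μ i with hc
  have hbdd : BddAbove (Set.range μ) := Set.Finite.bddAbove (Set.finite_range μ)
  have hμc : ∀ i, μ i ≤ c := fun i => le_ciSup hbdd i
  have hq2 : w ⬝ᵥ (Matrix.diagonal μ *ᵥ w) = ∑ i, μ i * (w i * w i) := by
    simp [dotProduct, Matrix.mulVec_diagonal]
    exact Finset.sum_congr rfl fun i _ => by ring
  rw [hq, hq2]
  calc ∑ i, μ i * (w i * w i) ≤ ∑ i, c * (w i * w i) := by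
        refine Finset.sum_le_sum fun i _ => ?_
        exact mul_le_mul_of_nonneg_right (hμc i) (mul_self_nonneg _)
  _ = c * (w ⬝ᵥ w) := by rw [dotProduct, Finset.mul_sum]
  _ = c := by rw [hww, mul_one]

end SpecRadAux

open SpecRadAux in
theorem specRad_convexOn {N : ℕ} (K : Matrix (Fin N) (Fin N) ℝ)
    (hK : ∀ i j, 0 ≤ K i j) (hsym : K.IsSymm) (hpsd : K.PosSemidef) :
    ConvexOn ℝ (Set.Icc (0 : Fin N → ℝ) 1)
      (fun η => specRad (K * Matrix.diagonal η)) := by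
  classical
  obtain ⟨B, hB, hBB⟩ : ∃ B : Matrix (Fin N) (Fin N) ℝ, B.PosSemidef ∧ B * B = K := by
    open scoped MatrixOrder in
    exact ⟨CFC.sqrt K, (CFC.sqrt_nonneg K).posSemidef, CFC.sqrt_mul_sqrt_self K hpsd.nonneg⟩
  have hBH : Bᴴ = B := hB.1
  have hPSD : ∀ η : Fin N → ℝ, 0 ≤ η → (B * Matrix.diagonal η * B).PosSemidef := by
    intro η hη
    have hD : (Matrix.diagonal η).PosSemidef := Matrix.PosSemidef.diagonal hη
    have := hD.mul_mul_conjTranspose_same B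
    rwa [hBH] at this
  have key : ∀ η : Fin N → ℝ, 0 ≤ η → ∀ h : (B * Matrix.diagonal η * B).PosSemidef,
      specRad (K * Matrix.diagonal η) = ⨆ i, h.1.eigenvalues i := by
    intro η hη h
    apply specRad_eq _ _ h
    have e1 : K * Matrix.diagonal η = B * (B * Matrix.diagonal η) := by
      rw [← hBB, mul_assoc]
    rw [e1]
    simp only [Matrix.map_mul]
    exact spectrum_mul_comm _ _
  constructor
  · exact convex_Icc _ _
  · intro η hη θ hθ a b ha hb hab
    simp only
    have hη0 : (0 : Fin N → ℝ) ≤ η := hη.1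
    have hθ0 : (0 : Fin N → ℝ) ≤ θ := hθ.1
    have hc0 : (0 : Fin N → ℝ) ≤ a • η + b • θ :=
      add_nonneg (smul_nonneg ha hη0) (smul_nonneg hb hθ0)
    have hPη := hPSD η hη0
    have hPθ := hPSD θ hθ0
    have hPc := hPSD _ hc0
    rw [key η hη0 hPη, key θ hθ0 hPθ, key _ hc0 hPc]
    rcases isEmpty_or_nonempty (Fin N) with hN | hN
    · simp [Real.iSup_of_isEmpty]
    · obtain ⟨j, hj⟩ := Finite.exists_max (fun i => hPc.1.eigenvalues i)
      have hbdd : BddAbove (Set.range fun i => hPc.1.eigenvalues i) :=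
        Set.Finite.bddAbove (Set.finite_range _)
      have hiSup : (⨆ i, hPc.1.eigenvalues i) = hPc.1.eigenvalues j :=
        le_antisymm (ciSup_le hj) (le_ciSup hbdd j)
      rw [hiSup]
      set v : Fin N → ℝ := ⇑(hPc.1.eigenvectorBasis j) with hvdef
      have hval : hPc.1.eigenvalues j = v ⬝ᵥ ((B * Matrix.diagonal (a • η + b • θ) * B) *ᵥ v) := by
        have h := hPc.1.eigenvalues_eq j
        simpa using h
      have hunit : v ⬝ᵥ v = 1 := by
        have h1 : ‖hPc.1.eigenvectorBasis j‖ = 1 := hPc.1.eigenvectorBasis.orthonormal.1 j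
        have h2 : (inner ℝ (hPc.1.eigenvectorBasis j) (hPc.1.eigenvectorBasis j) : ℝ) = 1 := by
          rw [real_inner_self_eq_norm_mul_norm, h1, mul_one]
        rw [← h2, PiLp.inner_apply]
        simp [dotProduct, hvdef, sq]
      have hsplit : B * Matrix.diagonal (a • η + b • θ) * B =
          a • (B * Matrix.diagonal η * B) + b • (B * Matrix.diagonal θ * B) := by
        have : Matrix.diagonal (a • η + b • θ) =
            a • Matrix.diagonal η + b • Matrix.diagonal θ := by
          ext i j
          by_cases h : i = j
          · subst h; simp
          · simp [Matrix.diagonal_apply_ne _ h]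
        rw [this, Matrix.mul_add, Matrix.add_mul, Matrix.mul_smul, Matrix.mul_smul,
          Matrix.smul_mul, Matrix.smul_mul]
      rw [hval, hsplit]
      have hexpand : v ⬝ᵥ ((a • (B * Matrix.diagonal η * B) + b • (B * Matrix.diagonal θ * B)) *ᵥ v)
          = a * (v ⬝ᵥ ((B * Matrix.diagonal η * B) *ᵥ v))
            + b * (v ⬝ᵥ ((B * Matrix.diagonal θ * B) *ᵥ v)) := by
        rw [Matrix.add_mulVec, Matrix.smul_mulVec, Matrix.smul_mulVec,
          dotProduct_add, dotProduct_smul, dotProduct_smul]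
        simp [smul_eq_mul]
      rw [hexpand]
      exact add_le_add
        (mul_le_mul_of_nonneg_left (rayleigh_le _ hPη v hunit) ha)
        (mul_le_mul_of_nonneg_left (rayleigh_le _ hPθ v hunit) hb)
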